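/- Let A be a dual Banach algebra and φ a weak*-continuous character on A. If A is Johnson pseudo-Connes amenable, then A is φ-Connes amenable; that is, there exists a bounded linear functional m on σwc(A^*) with m(φ) = 1 and m(f·a) = φ(a) m(f) for all a ∈ A and f ∈ σwc(A^*). -/

import Mathlib

open Filter Topology ContinuousLinearMap

set_option maxHeartbeats 1000000
set_option linter.unusedVariables false
set_option synthInstance.maxHeartbeats 200000

noncomputable section

section DualBanach

variable {A : Type*} [NonUnitalNormedRing A] [NormedSpace ℂ A]
  [IsScalarTower ℂ A A] [SMulCommClass ℂ A A]

/-- Left multiplication `x ↦ a * x` as a continuous linear map. -/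
def mulL (a : A) : A →L[ℂ] A := ContinuousLinearMap.mul ℂ A a

/-- Right multiplication `x ↦ x * a` as a continuous linear map. -/
def mulR (a : A) : A →L[ℂ] A := (ContinuousLinearMap.mul ℂ A).flip a

@[simp] lemma mulL_apply (a x : A) : mulL a x = a * x := rfl
@[simp] lemma mulR_apply (a x : A) : mulR a x = x * a := rfl

/-- The canonical evaluation of `a : A` on a submodule of the dual, giving a
functional on that submodule. -/
def evalOn (S : Submodule ℂ (A →L[ℂ] ℂ)) (a : A) : S →L[ℂ] ℂ :=
  (ContinuousLinearMap.apply ℂ ℂ a).comp S.subtypeL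

/-- A dual Banach algebra structure on `A`: a closed submodule `carrier` of the
dual `A⋆` (closed under the module actions) such that `A` is canonically
isometrically isomorphic to the dual of `carrier`. -/
structure DualStructure (A : Type*) [NonUnitalNormedRing A] [NormedSpace ℂ A]
    [IsScalarTower ℂ A A] [SMulCommClass ℂ A A] where
  carrier : Submodule ℂ (A →L[ℂ] ℂ)
  isClosed' : IsClosed (carrier : Set (A →L[ℂ] ℂ))
  lact_mem' : ∀ (a : A) (f : A →L[ℂ] ℂ), f ∈ carrier → f.comp (mulR a) ∈ carrier
  ract_mem' : ∀ (a : A) (f : A →L[ℂ] ℂ), f ∈ carrier → f.comp (mulL a) ∈ carrier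
  bijective' : Function.Bijective (fun a : A => evalOn carrier a)
  isometry' : ∀ a : A,
    sSup {r : ℝ | ∃ f : A →L[ℂ] ℂ, f ∈ carrier ∧ ‖f‖ ≤ 1 ∧ r = ‖f a‖} = ‖a‖

/-- `A`, regarded with its weak-star topology `σ(A, A_*)`. -/
def WkA (P : DualStructure A) : Type _ := A

/-- The identity map `WkA P → A`. -/
def WkA.un (P : DualStructure A) : WkA P → A := fun a => a

/-- The identity map `A → WkA P`. -/
def WkA.mk (P : DualStructure A) : A → WkA P := fun a => a

instance (P : DualStructure A) : TopologicalSpace (WkA P) :=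
  TopologicalSpace.induced
    (fun a => fun f : P.carrier => (f : A →L[ℂ] ℂ) (WkA.un P a)) inferInstance

/-- Weak-star continuity of a map out of a dual Banach algebra. -/
def WkCont (P : DualStructure A) {E : Type*} [TopologicalSpace E] (g : A → E) : Prop :=
  Continuous fun a : WkA P => g (WkA.un P a)

/-- The dual of the projective tensor product `A ⊗̂ A`, realized as the space of
bounded bilinear functionals on `A × A`. -/
abbrev TDual (A : Type*) [NonUnitalNormedRing A] [NormedSpace ℂ A]
    [IsScalarTower ℂ A A] [SMulCommClass ℂ A A] := A →L[ℂ] A →L[ℂ] ℂ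

/-- The left action `a · T` of `A` on `(A ⊗̂ A)⋆`: `(a·T)(b ⊗ c) = T(b ⊗ ca)`. -/
def lactOp (a : A) : TDual A →L[ℂ] TDual A :=
  compL ℂ A (A →L[ℂ] ℂ) (A →L[ℂ] ℂ) ((compL ℂ A A ℂ).flip (mulR a))

/-- The right action `T · a` of `A` on `(A ⊗̂ A)⋆`: `(T·a)(b ⊗ c) = T(ab ⊗ c)`. -/
def ractOp (a : A) : TDual A →L[ℂ] TDual A :=
  (compL ℂ A A (A →L[ℂ] ℂ)).flip (mulL a)

@[simp] lemma lactOp_apply (a : A) (T : TDual A) (b c : A) :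
    lactOp a T b c = T b (c * a) := rfl

@[simp] lemma ractOp_apply (a : A) (T : TDual A) (b c : A) :
    ractOp a T b c = T (a * b) c := rfl

/-- `σwc((A ⊗̂ A)⋆)`: the set of bilinear functionals `T` for which both
`a ↦ a·T` and `a ↦ T·a` are weak-star–weak continuous. -/
def sigmaWC (P : DualStructure A) : Set (TDual A) :=
  {T | ∀ Φ : TDual A →L[ℂ] ℂ,
    WkCont P (fun a => Φ (lactOp a T)) ∧ WkCont P (fun a => Φ (ractOp a T))}

/-- `σwc((A ⊗̂ A)⋆)` as a submodule. -/
def sigmaWCsub (P : DualStructure A) : Submodule ℂ (TDual A) where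
  carrier := sigmaWC P
  zero_mem' := by
    intro Φ
    constructor <;>
    · show Continuous _
      have : (fun x : WkA P => Φ ((0 : TDual A →L[ℂ] TDual A) 0)) = fun _ => (0 : ℂ) := by
        funext x; simp
      simp only [map_zero]
      exact continuous_const
  add_mem' := by
    intro T S hT hS Φ
    constructor
    · have h := ((hT Φ).1).add ((hS Φ).1)
      show Continuous _
      simp only [map_add]; exact h
    · have h := ((hT Φ).2).add ((hS Φ).2)
      show Continuous _
      simp only [map_add]; exact h
  smul_mem' := by
    intro c T hT Φ
    constructor
    · have h := ((hT Φ).1).const_smul c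
      show Continuous _
      simp only [map_smul]; exact h
    · have h := ((hT Φ).2).const_smul c
      show Continuous _
      simp only [map_smul]; exact h

lemma wkCont_of_mem (P : DualStructure A) {f : A →L[ℂ] ℂ} (hf : f ∈ P.carrier) :
    WkCont P (fun a => f a) := by
  have h1 : Continuous fun a : WkA P =>
      (fun g : P.carrier => (g : A →L[ℂ] ℂ) (WkA.un P a)) := continuous_induced_dom
  exact (continuous_apply (⟨f, hf⟩ : P.carrier)).comp h1

lemma wkCont_mulL (P : DualStructure A) (a : A) :
    Continuous fun x : WkA P => WkA.mk P (a * WkA.un P x) := by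
  apply continuous_induced_rng.2
  apply continuous_pi
  intro g
  exact wkCont_of_mem P (P.ract_mem' a g.1 g.2)

lemma wkCont_mulR (P : DualStructure A) (a : A) :
    Continuous fun x : WkA P => WkA.mk P (WkA.un P x * a) := by
  apply continuous_induced_rng.2
  apply continuous_pi
  intro g
  exact wkCont_of_mem P (P.lact_mem' a g.1 g.2)

lemma ract_mem_sigmaWC (P : DualStructure A) {T : TDual A}
    (hT : T ∈ sigmaWC P) (a : A) : ractOp a T ∈ sigmaWC P := by
  intro Φ
  constructor
  · have key : ∀ a' : A, lactOp a' (ractOp a T) = ractOp a (lactOp a' T) := by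
      intro a'; ext b c; simp
    have h := (hT (Φ.comp (ractOp a))).1
    show Continuous _
    simp only [key]; exact h
  · have key : ∀ a' : A, ractOp a' (ractOp a T) = ractOp (a * a') T := by
      intro a'; ext b c; simp [mul_assoc]
    have h := ((hT Φ).2).comp (wkCont_mulL P a)
    show Continuous _
    simp only [key]; exact h

lemma lact_mem_sigmaWC (P : DualStructure A) {T : TDual A}
    (hT : T ∈ sigmaWC P) (a : A) : lactOp a T ∈ sigmaWC P := by
  intro Φ
  constructor
  · have key : ∀ a' : A, lactOp a' (lactOp a T) = lactOp (a' * a) T := by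
      intro a'; ext b c; simp [mul_assoc]
    have h := ((hT Φ).1).comp (wkCont_mulR P a)
    show Continuous _
    simp only [key]; exact h
  · have key : ∀ a' : A, ractOp a' (lactOp a T) = lactOp a (ractOp a' T) := by
      intro a'; ext b c; simp
    have h := (hT (Φ.comp (lactOp a))).2
    show Continuous _
    simp only [key]; exact h

/-- The adjoint of the multiplication map `π : A ⊗̂ A → A` applied to a
functional: `π⋆(f)(b ⊗ c) = f (b c)`. -/
def piStar (f : A →L[ℂ] ℂ) : TDual A :=
  (compL ℂ A A ℂ f).comp (ContinuousLinearMap.mul ℂ A)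

@[simp] lemma piStar_apply (f : A →L[ℂ] ℂ) (b c : A) : piStar f b c = f (b * c) := rfl

/-- Johnson pseudo-Connes amenability of a dual Banach algebra: there is a (not
necessarily bounded) net `(m i)` in `(A ⊗̂ A)⋆⋆` such that
`⟨T, a·mᵢ⟩ = ⟨T, mᵢ·a⟩` for all `T ∈ σwc((A ⊗̂ A)⋆)` and
`i⋆_{A_*} π⋆⋆(mᵢ) a → a` in norm for every `a`; the element `b i ∈ A`
represents `i⋆_{A_*} π⋆⋆(mᵢ)` via `f (b i) = mᵢ (π⋆ f)` for all `f ∈ A_*`. -/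
def IsJPCA (P : DualStructure A) : Prop :=
  ∃ (ι : Type) (pr : Preorder ι), Nonempty ι ∧
    (∀ i j : ι, ∃ k, pr.le i k ∧ pr.le j k) ∧
    ∃ (m : ι → (TDual A →L[ℂ] ℂ)) (b : ι → A),
      (∀ i (a : A), ∀ T ∈ sigmaWC P, m i (ractOp a T) = m i (lactOp a T)) ∧
      (∀ i, ∀ f ∈ P.carrier, f (b i) = m i (piStar f)) ∧
      (∀ a : A, Tendsto (fun i => b i * a) (@Filter.atTop ι pr) (nhds a))

end DualBanach

section Statements

variable {A : Type*} [NonUnitalNormedRing A] [NormedSpace ℂ A]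
  [IsScalarTower ℂ A A] [SMulCommClass ℂ A A]

/-- The left action `a · f` of `A` on `A⋆`: `(a·f)(x) = f(xa)`. -/
def lactA (a : A) : (A →L[ℂ] ℂ) →L[ℂ] (A →L[ℂ] ℂ) :=
  (compL ℂ A A ℂ).flip (mulR a)

/-- The right action `f · a` of `A` on `A⋆`: `(f·a)(x) = f(ax)`. -/
def ractA (a : A) : (A →L[ℂ] ℂ) →L[ℂ] (A →L[ℂ] ℂ) :=
  (compL ℂ A A ℂ).flip (mulL a)

@[simp] lemma lactA_apply (a : A) (f : A →L[ℂ] ℂ) (x : A) : lactA a f x = f (x * a) := rfl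
@[simp] lemma ractA_apply (a : A) (f : A →L[ℂ] ℂ) (x : A) : ractA a f x = f (a * x) := rfl

/-- `σwc(A⋆)`: the functionals `f ∈ A⋆` for which `a ↦ a·f` and `a ↦ f·a` are
weak-star–weak continuous. -/
def sigmaWCA (P : DualStructure A) : Set (A →L[ℂ] ℂ) :=
  {f | ∀ Ψ : (A →L[ℂ] ℂ) →L[ℂ] ℂ,
    WkCont P (fun a => Ψ (lactA a f)) ∧ WkCont P (fun a => Ψ (ractA a f))}

/-- `σwc(A⋆)` as a submodule of `A⋆`. -/
def sigmaWCAsub (P : DualStructure A) : Submodule ℂ (A →L[ℂ] ℂ) where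
  carrier := sigmaWCA P
  zero_mem' := by
    intro Ψ
    constructor <;>
    · show Continuous _
      simp only [map_zero]
      exact continuous_const
  add_mem' := by
    intro f g hf hg Ψ
    constructor
    · have h := ((hf Ψ).1).add ((hg Ψ).1)
      show Continuous _
      simp only [map_add]; exact h
    · have h := ((hf Ψ).2).add ((hg Ψ).2)
      show Continuous _
      simp only [map_add]; exact h
  smul_mem' := by
    intro c f hf Ψ
    constructor
    · have h := ((hf Ψ).1).const_smul c
      show Continuous _
      simp only [map_smul]; exact h
    · have h := ((hf Ψ).2).const_smul c
      show Continuous _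
      simp only [map_smul]; exact h

/-- A weak-star continuous linear functional on a dual Banach algebra belongs
to the predual. -/
lemma mem_carrier_of_wkCont (P : DualStructure A) (φ : A →L[ℂ] ℂ)
    (hwk : WkCont P fun a => φ a) : φ ∈ P.carrier := by
  classical
  set toPi : WkA P → (P.carrier → ℂ) :=
    fun a => fun f : P.carrier => (f : A →L[ℂ] ℂ) (WkA.un P a) with htoPi
  have hx0 : φ (WkA.un P (WkA.mk P (0 : A))) = 0 := map_zero φ
  have hs : (fun a : WkA P => φ (WkA.un P a)) ⁻¹' Metric.ball 0 1
      ∈ 𝓝 (WkA.mk P (0 : A)) := by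
    have h1 : Filter.Tendsto (fun a : WkA P => φ (WkA.un P a))
        (𝓝 (WkA.mk P (0 : A))) (𝓝 0) := by
      have h2 := hwk.tendsto (WkA.mk P (0 : A))
      simpa [hx0] using h2
    exact h1 (Metric.ball_mem_nhds 0 one_pos)
  have hnhds : 𝓝 (WkA.mk P (0 : A))
      = Filter.comap toPi (𝓝 (toPi (WkA.mk P (0 : A)))) := nhds_induced _ _
  rw [hnhds] at hs
  obtain ⟨V, hV, hVs⟩ := Filter.mem_comap.1 hs
  have h0pi : toPi (WkA.mk P (0 : A)) = (fun _ => 0) := by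
    funext f; show (f : A →L[ℂ] ℂ) (0 : A) = 0; exact map_zero _
  rw [h0pi, nhds_pi] at hV
  obtain ⟨I, hIfin, t, ht, hsub⟩ := Filter.mem_pi.1 hV
  -- key: functionals in I jointly dominate φ
  have key : ∀ a : A, (∀ g ∈ I, (g : A →L[ℂ] ℂ) a = 0) → φ a = 0 := by
    intro a ha
    by_contra h0
    have hball : ∀ c : ℂ, ‖c‖ * ‖φ a‖ < 1 := by
      intro c
      have hmem : toPi (WkA.mk P (c • a)) ∈ I.pi t := by
        intro g hg
        have : (g : A →L[ℂ] ℂ) (c • a) = 0 := by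
          rw [map_smul, ha g hg, smul_zero]
        show (g : A →L[ℂ] ℂ) (c • a) ∈ t g
        rw [this]
        exact mem_of_mem_nhds (ht g)
      have := hVs (hsub hmem)
      have h2 : φ (c • a) ∈ Metric.ball (0 : ℂ) 1 := this
      rw [Metric.mem_ball, dist_zero_right, map_smul, norm_smul] at h2
      exact h2
    have hc := hball ((2 / ‖φ a‖ : ℝ) : ℂ)
    have hφa : ‖φ a‖ ≠ 0 := by
      simpa [norm_eq_zero] using h0
    rw [Complex.norm_real, Real.norm_eq_abs] at hc
    have hpos : (0 : ℝ) < ‖φ a‖ := lt_of_le_of_ne (norm_nonneg _) (Ne.symm hφa)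
    rw [abs_of_nonneg (by positivity)] at hc
    rw [div_mul_cancel₀ _ hφa] at hc
    linarith
  haveI : Finite I := hIfin.to_subtype
  set L : I → A →ₗ[ℂ] ℂ := fun g => ((g.1 : A →L[ℂ] ℂ) : A →ₗ[ℂ] ℂ) with hL
  have hker : ⨅ g : I, LinearMap.ker (L g)
      ≤ LinearMap.ker ((φ : A →L[ℂ] ℂ) : A →ₗ[ℂ] ℂ) := by
    intro a ha
    rw [LinearMap.mem_ker]
    apply key a
    intro g hg
    have := (Submodule.mem_iInf _).1 ha ⟨g, hg⟩
    exact this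
  have hspan := mem_span_of_iInf_ker_le_ker hker
  have hle : Submodule.span ℂ (Set.range L)
      ≤ P.carrier.map (ContinuousLinearMap.coeLM ℂ) := by
    apply Submodule.span_le.2
    rintro _ ⟨g, rfl⟩
    exact ⟨g.1.1, g.1.2, rfl⟩
  obtain ⟨ψ, hψmem, hψeq⟩ := hle hspan
  have hψφ : ψ = φ := by
    ext x
    exact DFunLike.congr_fun hψeq x
  rwa [← hψφ]

/-- If a dual Banach algebra `A` is Johnson pseudo-Connes
amenable and `φ` is a weak-star continuous character on `A`, then `A` is
`φ`-Connes amenable: there is a bounded linear functional `m` on `σwc(A⋆)`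
with `m(φ) = 1` and `m(f·a) = φ(a) m(f)` for all `a ∈ A`, `f ∈ σwc(A⋆)`. -/
theorem johnsonPseudoConnesAmenable_implies_phiConnesAmenable
    [CompleteSpace A] (P : DualStructure A) (φ : A →L[ℂ] ℂ)
    (hmul : ∀ a b : A, φ (a * b) = φ a * φ b) (hne : φ ≠ 0)
    (hwk : WkCont P fun a => φ a)
    (h : IsJPCA P) :
    ∃ m : sigmaWCAsub P →L[ℂ] ℂ,
      (∀ hφ : φ ∈ sigmaWCAsub P, m ⟨φ, hφ⟩ = 1) ∧
      (∀ (f : sigmaWCAsub P) (a : A) (hfa : ractA a (f : A →L[ℂ] ℂ) ∈ sigmaWCAsub P),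
        m ⟨ractA a (f : A →L[ℂ] ℂ), hfa⟩ = φ a * m f) := by
  classical
  obtain ⟨ι, pr, hni, hdir, mm, b, hcomm, hrep, hconv⟩ := h
  letI : Preorder ι := pr
  haveI : Nonempty ι := hni
  haveI : IsDirected ι (· ≤ ·) := ⟨hdir⟩
  haveI : (Filter.atTop : Filter ι).NeBot := Filter.atTop_neBot_iff.2 ⟨hni, ⟨hdir⟩⟩
  have hφmem : φ ∈ P.carrier := mem_carrier_of_wkCont P φ hwk
  -- the map θ⋆ : A⋆ → (A ⊗̂ A)⋆, f ↦ (b ⊗ c ↦ f b * φ c)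
  set θ : (A →L[ℂ] ℂ) →L[ℂ] TDual A
      := (ContinuousLinearMap.smulRightL ℂ A (A →L[ℂ] ℂ)).flip φ with hθ
  have hθ_apply : ∀ (f : A →L[ℂ] ℂ) (x y : A), θ f x y = f x * φ y := by
    intro f x y; rfl
  -- lactOp a (θ f) = φ a • θ f
  have hlact : ∀ (a : A) (f : A →L[ℂ] ℂ), lactOp a (θ f) = φ a • θ f := by
    intro a f
    ext x y
    show θ f x (y * a) = φ a • θ f x y
    rw [hθ_apply, hθ_apply, hmul, smul_eq_mul]
    ring
  -- ractOp a (θ f) = θ (f · a)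
  have hract : ∀ (a : A) (f : A →L[ℂ] ℂ), ractOp a (θ f) = θ (ractA a f) := by
    intro a f
    ext x y
    show θ f (a * x) y = θ (ractA a f) x y
    rw [hθ_apply, hθ_apply]
    rfl
  -- θ maps σwc(A⋆) into σwc((A ⊗̂ A)⋆)
  have hθσ : ∀ f ∈ sigmaWCA P, θ f ∈ sigmaWC P := by
    intro f hf Φ
    constructor
    · have heq : ∀ a : A, Φ (lactOp a (θ f)) = φ a * Φ (θ f) := by
        intro a
        rw [hlact, map_smul, smul_eq_mul]
      show Continuous fun a : WkA P => Φ (lactOp (WkA.un P a) (θ f))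
      simp only [heq]
      exact hwk.mul continuous_const
    · have heq : ∀ a : A, Φ (ractOp a (θ f)) = (Φ.comp θ) (ractA a f) := by
        intro a
        rw [hract]; rfl
      show Continuous fun a : WkA P => Φ (ractOp (WkA.un P a) (θ f))
      simp only [heq]
      exact (hf (Φ.comp θ)).2
  -- θ φ = π⋆ φ
  have hθφ : θ φ = piStar φ := by
    ext x y
    show θ φ x y = φ (x * y)
    rw [hθ_apply, hmul]
  -- find an index with φ (b i₀) ≠ 0
  obtain ⟨a₀, ha₀⟩ : ∃ a : A, φ a ≠ 0 := by
    by_contra hc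
    push_neg at hc
    exact hne (by ext x; simpa using hc x)
  have htend : Filter.Tendsto (fun i => φ (b i)) Filter.atTop (𝓝 1) := by
    have h1 : Filter.Tendsto (fun i => φ (b i * a₀)) Filter.atTop (𝓝 (φ a₀)) :=
      (φ.continuous.tendsto a₀).comp (hconv a₀)
    have h2 : Filter.Tendsto (fun i => φ (b i * a₀) * (φ a₀)⁻¹)
        Filter.atTop (𝓝 (φ a₀ * (φ a₀)⁻¹)) := h1.mul_const _
    rw [mul_inv_cancel₀ ha₀] at h2
    have h3 : (fun i => φ (b i * a₀) * (φ a₀)⁻¹) = fun i => φ (b i) := by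
      funext i
      rw [hmul, mul_assoc, mul_inv_cancel₀ ha₀, mul_one]
    rwa [h3] at h2
  obtain ⟨i₀, hi₀⟩ : ∃ i, φ (b i) ≠ 0 := by
    have := htend.eventually_ne (by norm_num : (1 : ℂ) ≠ 0)
    exact this.exists
  -- define the functional
  refine ⟨(φ (b i₀))⁻¹ • ((mm i₀).comp (θ.comp (sigmaWCAsub P).subtypeL)), ?_, ?_⟩
  · intro hφ
    have : mm i₀ (θ φ) = φ (b i₀) := by
      rw [hθφ, ← hrep i₀ φ hφmem]
    simp only [ContinuousLinearMap.smul_apply, ContinuousLinearMap.comp_apply,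
      Submodule.subtypeL_apply, smul_eq_mul]
    rw [this, inv_mul_cancel₀ hi₀]
  · intro f a hfa
    simp only [ContinuousLinearMap.smul_apply, ContinuousLinearMap.comp_apply,
      Submodule.subtypeL_apply, smul_eq_mul]
    have h1 : θ (ractA a (f : A →L[ℂ] ℂ)) = ractOp a (θ (f : A →L[ℂ] ℂ)) :=
      (hract a _).symm
    rw [h1, hcomm i₀ a _ (hθσ _ f.2), hlact, map_smul, smul_eq_mul]
    ring

end Statements
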